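/- arXiv:2511.21061 — 4 statements merged into one kernel-verified Lean document; each statement's English description precedes it below -/
import Mathlib

section
/- Let Γ be a finite simple graph each of whose edges is colored red, green, or blue, with R red edges, G green edges, and B blue edges, and let T be the number of rainbow triangles in Γ. Then T^2 ≤ 2·R·G·B. -/
open scoped Classical

noncomputable section

namespace RainbowTri

variable {V : Type*} [Fintype V]

/-- The finset of edges of `Γ` having color `c` (red = 0, green = 1, blue = 2). -/
def colorEdges (Γ : SimpleGraph V) (col : Sym2 V → Fin 3) (c : Fin 3) : Finset (Sym2 V) :=
  Finset.univ.filter (fun e => e ∈ Γ.edgeSet ∧ col e = c)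

/-- The finset of rainbow triangles: 3-sets of pairwise adjacent vertices whose three
edges receive three distinct colors. -/
def rainbowTriangles (Γ : SimpleGraph V) (col : Sym2 V → Fin 3) : Finset (Finset V) :=
  Finset.univ.filter (fun s => ∃ a b c : V, s = {a, b, c} ∧
    Γ.Adj a b ∧ Γ.Adj a c ∧ Γ.Adj b c ∧
    col s(a, b) ≠ col s(a, c) ∧ col s(a, b) ≠ col s(b, c) ∧ col s(a, c) ≠ col s(b, c))

/-- The finset of properly 3-edge-colored copies of `K₄`: 4-sets of pairwise adjacent
vertices on which each color appears on exactly two (disjoint) of the six edges. -/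
def properK4s (Γ : SimpleGraph V) (col : Sym2 V → Fin 3) : Finset (Finset V) :=
  Finset.univ.filter (fun s => ∃ a b c d : V, s = {a, b, c, d} ∧
    Γ.Adj a b ∧ Γ.Adj a c ∧ Γ.Adj a d ∧ Γ.Adj b c ∧ Γ.Adj b d ∧ Γ.Adj c d ∧
    col s(a, b) = col s(c, d) ∧ col s(a, c) = col s(b, d) ∧ col s(a, d) = col s(b, c) ∧
    col s(a, b) ≠ col s(a, c) ∧ col s(a, b) ≠ col s(a, d) ∧ col s(a, c) ≠ col s(a, d))

/-- The color pattern of a proper 3-edge-coloring of `K₄` on vertex set `Fin 4`: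
opposite edges get the same color ({0,1},{2,3} ↦ 0; {0,2},{1,3} ↦ 1; {0,3},{1,2} ↦ 2). -/
def pairColor (i j : Fin 4) : Fin 3 :=
  ⟨((i.val ^^^ j.val) - 1) % 3, Nat.mod_lt _ (by norm_num)⟩

/-- `Γ` (with edge coloring `col`) is obtained from a blowup of a properly
3-edge-colored `K₄` by possibly adding a set of isolated vertices: vertices mapped to
`none` are isolated, vertices are adjacent iff they lie in distinct parts, and colors
between parts follow the proper `K₄`-pattern up to a permutation `σ` of the colors. -/
def IsBlowupK4PlusIsolated (Γ : SimpleGraph V) (col : Sym2 V → Fin 3) : Prop :=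
  ∃ (P : V → Option (Fin 4)) (σ : Equiv.Perm (Fin 3)),
    (∀ u v : V, Γ.Adj u v ↔ ∃ i j : Fin 4, i ≠ j ∧ P u = some i ∧ P v = some j) ∧
    (∀ (u v : V) (i j : Fin 4), P u = some i → P v = some j → Γ.Adj u v →
      col s(u, v) = σ (pairColor i j))

/-- As `IsBlowupK4PlusIsolated`, where moreover the four parts have equal size. -/
def IsBalancedBlowupK4PlusIsolated (Γ : SimpleGraph V) (col : Sym2 V → Fin 3) : Prop :=
  ∃ (P : V → Option (Fin 4)) (σ : Equiv.Perm (Fin 3)),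
    (∀ u v : V, Γ.Adj u v ↔ ∃ i j : Fin 4, i ≠ j ∧ P u = some i ∧ P v = some j) ∧
    (∀ (u v : V) (i j : Fin 4), P u = some i → P v = some j → Γ.Adj u v →
      col s(u, v) = σ (pairColor i j)) ∧
    (∀ i j : Fin 4, (Finset.univ.filter (fun v => P v = some i)).card
      = (Finset.univ.filter (fun v => P v = some j)).card)

/-- `Γ` (with edge coloring `col`) is a balanced blowup of a properly 3-edge-colored
`K₄` (no extra isolated vertices). -/
def IsBalancedBlowupK4 (Γ : SimpleGraph V) (col : Sym2 V → Fin 3) : Prop :=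
  ∃ (P : V → Fin 4) (σ : Equiv.Perm (Fin 3)),
    (∀ u v : V, Γ.Adj u v ↔ P u ≠ P v) ∧
    (∀ u v : V, Γ.Adj u v → col s(u, v) = σ (pairColor (P u) (P v))) ∧
    (∀ i j : Fin 4, (Finset.univ.filter (fun v => P v = i)).card
      = (Finset.univ.filter (fun v => P v = j)).card)

/-- `d⁺(u,v)`: the number of vertices `w` with `uw` blue and `vw` green. -/
def dPlus (Γ : SimpleGraph V) (col : Sym2 V → Fin 3) (u v : V) : ℕ :=
  (Finset.univ.filter (fun w => Γ.Adj u w ∧ col s(u, w) = 2 ∧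
    Γ.Adj v w ∧ col s(v, w) = 1)).card

/-- `d⁻(u,v)`: the number of vertices `w` with `uw` green and `vw` blue. -/
def dMinus (Γ : SimpleGraph V) (col : Sym2 V → Fin 3) (u v : V) : ℕ :=
  (Finset.univ.filter (fun w => Γ.Adj u w ∧ col s(u, w) = 1 ∧
    Γ.Adj v w ∧ col s(v, w) = 2)).card

/-- `d_K(u,v)`: the number of ordered pairs `(w,x)` with `wx` red, `uw`, `vx` green
and `ux`, `vw` blue. -/
def dK (Γ : SimpleGraph V) (col : Sym2 V → Fin 3) (u v : V) : ℕ :=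
  (Finset.univ.filter (fun p : V × V => Γ.Adj p.1 p.2 ∧ col s(p.1, p.2) = 0 ∧
    Γ.Adj u p.1 ∧ col s(u, p.1) = 1 ∧ Γ.Adj v p.2 ∧ col s(v, p.2) = 1 ∧
    Γ.Adj u p.2 ∧ col s(u, p.2) = 2 ∧ Γ.Adj v p.1 ∧ col s(v, p.1) = 2)).card

/-- Ordered pairs of vertices inducing a red edge. -/
def redPairs (Γ : SimpleGraph V) (col : Sym2 V → Fin 3) : Finset (V × V) :=
  Finset.univ.filter (fun p => Γ.Adj p.1 p.2 ∧ col s(p.1, p.2) = 0)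

/-- The set `S` of ordered tuples `(u,v,x,y)` with `uv` red, `ux`, `uy` blue and
`vx`, `vy` green (`x = y` allowed). -/
def tupleSet (Γ : SimpleGraph V) (col : Sym2 V → Fin 3) : Finset (V × V × V × V) :=
  Finset.univ.filter (fun t => Γ.Adj t.1 t.2.1 ∧ col s(t.1, t.2.1) = 0 ∧
    Γ.Adj t.1 t.2.2.1 ∧ col s(t.1, t.2.2.1) = 2 ∧
    Γ.Adj t.1 t.2.2.2 ∧ col s(t.1, t.2.2.2) = 2 ∧
    Γ.Adj t.2.1 t.2.2.1 ∧ col s(t.2.1, t.2.2.1) = 1 ∧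
    Γ.Adj t.2.1 t.2.2.2 ∧ col s(t.2.1, t.2.2.2) = 1)

def triples (Γ : SimpleGraph V) (col : Sym2 V → Fin 3) : Finset (V × V × V) :=
  Finset.univ.filter (fun t => Γ.Adj t.1 t.2.1 ∧ col s(t.1, t.2.1) = 0 ∧
    Γ.Adj t.1 t.2.2 ∧ col s(t.1, t.2.2) = 2 ∧
    Γ.Adj t.2.1 t.2.2 ∧ col s(t.2.1, t.2.2) = 1)

lemma redPairs_card_le (Γ : SimpleGraph V) (col : Sym2 V → Fin 3) :
    (redPairs Γ col).card ≤ 2 * (colorEdges Γ col 0).card := by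
  apply Finset.card_le_mul_card_image_of_maps_to (f := fun p : V × V => s(p.1, p.2))
  · intro p hp
    simp only [redPairs, colorEdges, Finset.mem_filter, Finset.mem_univ, true_and] at hp ⊢
    exact ⟨hp.1, hp.2⟩
  · intro b _
    induction b using Sym2.inductionOn with
    | hf x y =>
      have : (redPairs Γ col).filter (fun a => s(a.1, a.2) = s(x,y)) ⊆ {(x,y), (y,x)} := by
        intro p hp
        simp only [Finset.mem_filter, Sym2.eq_iff] at hp
        rcases hp.2 with ⟨h1, h2⟩ | ⟨h1, h2⟩
        · simp [Prod.ext_iff, h1, h2]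
        · simp [Prod.ext_iff, h1, h2]
      calc _ ≤ ({(x,y),(y,x)} : Finset (V × V)).card := Finset.card_le_card this
        _ ≤ 2 := by apply le_trans (Finset.card_insert_le _ _); simp

lemma tupleSet_card_le (Γ : SimpleGraph V) (col : Sym2 V → Fin 3) :
    (tupleSet Γ col).card ≤ (colorEdges Γ col 1).card * (colorEdges Γ col 2).card := by
  rw [← Finset.card_product]
  apply Finset.card_le_card_of_injOn
    (fun t : V × V × V × V => (s(t.2.1, t.2.2.1), s(t.1, t.2.2.2)))
  · rintro ⟨u, v, x, y⟩ ht
    simp only [Finset.mem_coe, tupleSet, Finset.mem_filter, Finset.mem_univ, true_and] at ht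
    obtain ⟨huv, cuv, hux, cux, huy, cuy, hvx, cvx, hvy, cvy⟩ := ht
    simp only [Finset.mem_coe, Finset.mem_product, colorEdges, Finset.mem_filter, Finset.mem_univ, true_and]
    exact ⟨⟨hvx, cvx⟩, ⟨huy, cuy⟩⟩
  · intro t ht t' ht' heq
    simp only [Finset.mem_coe, tupleSet, Finset.mem_filter, Finset.mem_univ, true_and] at ht ht'
    obtain ⟨u, v, x, y⟩ := t
    obtain ⟨u', v', x', y'⟩ := t'
    obtain ⟨huv, cuv, hux, cux, huy, cuy, hvx, cvx, hvy, cvy⟩ := ht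
    obtain ⟨huv', cuv', hux', cux', huy', cuy', hvx', cvx', hvy', cvy'⟩ := ht'
    have hsym : ∀ a b : V, col s(a,b) = col s(b,a) := fun a b => by rw [Sym2.eq_swap]
    rw [Prod.ext_iff] at heq
    obtain ⟨h1, h2⟩ := heq
    simp only [Sym2.eq_iff] at h1 h2
    rcases h1 with ⟨rfl, rfl⟩ | ⟨rfl, rfl⟩ <;> rcases h2 with ⟨rfl, rfl⟩ | ⟨rfl, rfl⟩
    · rfl
    · -- u = y', y = u' ; v'=v, x'=x: u'v' red means col s(y, v) = 0, but cvy : col s(v,y)=1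
      rw [hsym] at cuv'; rw [cuv'] at cvy; exact absurd cvy (by decide)
    · -- v = x', x = v'; u'=u,y'=y: u'v' red: col s(u, x) = 0 but cux=2
      rw [cuv'] at cux; exact absurd cux (by decide)
    · -- v=x', x=v', u=y', y=u': u'x' blue: col s(y, v)=2 but cvy : col s(v,y)=1
      rw [hsym] at cux'; rw [cux'] at cvy; exact absurd cvy (by decide)

lemma sum_dPlus_sq (Γ : SimpleGraph V) (col : Sym2 V → Fin 3) :
    ∑ p ∈ redPairs Γ col, (dPlus Γ col p.1 p.2) ^ 2 = (tupleSet Γ col).card := by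
  have hmaps : ∀ t ∈ tupleSet Γ col, (t.1, t.2.1) ∈ redPairs Γ col := by
    intro t ht
    simp only [tupleSet, Finset.mem_filter, Finset.mem_univ, true_and] at ht
    simp only [redPairs, Finset.mem_filter, Finset.mem_univ, true_and]
    exact ⟨ht.1, ht.2.1⟩
  rw [Finset.card_eq_sum_card_fiberwise hmaps]
  apply Finset.sum_congr rfl
  rintro ⟨u, v⟩ hp
  simp only [redPairs, Finset.mem_filter, Finset.mem_univ, true_and] at hp
  set W := Finset.univ.filter (fun w => Γ.Adj u w ∧ col s(u, w) = 2 ∧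
    Γ.Adj v w ∧ col s(v, w) = 1) with hW
  have : dPlus Γ col u v = W.card := rfl
  rw [this, sq, ← Finset.card_product]
  apply Finset.card_nbij' (fun q => (u, v, q.1, q.2)) (fun t => (t.2.2.1, t.2.2.2))
  · rintro ⟨x, y⟩ hq
    simp only [Finset.mem_coe, Finset.mem_product, hW, Finset.mem_filter, Finset.mem_univ,
      true_and] at hq
    obtain ⟨⟨h1, h2, h3, h4⟩, ⟨h5, h6, h7, h8⟩⟩ := hq
    simp only [Finset.mem_coe, Finset.mem_filter, tupleSet, Finset.mem_univ, true_and]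
    exact ⟨⟨hp.1, hp.2, h1, h2, h5, h6, h3, h4, h7, h8⟩, trivial⟩
  · intro t ht
    simp only [Finset.mem_coe, Finset.mem_filter, tupleSet, Finset.mem_univ, true_and] at ht
    obtain ⟨⟨h1, h2, h3, h4, h5, h6, h7, h8, h9, h10⟩, heq⟩ := ht
    obtain ⟨u', v', x, y⟩ := t
    simp only [Prod.ext_iff] at heq
    obtain ⟨rfl, rfl⟩ : u' = u ∧ v' = v := ⟨heq.1, heq.2⟩
    simp only [Finset.mem_coe, Finset.mem_product, hW, Finset.mem_filter, Finset.mem_univ,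
      true_and]
    exact ⟨⟨h3, h4, h7, h8⟩, ⟨h5, h6, h9, h10⟩⟩
  · rintro ⟨x, y⟩ hq; rfl
  · intro t ht
    simp only [Finset.mem_coe, Finset.mem_filter, tupleSet, Finset.mem_univ, true_and] at ht
    obtain ⟨u', v', x, y⟩ := t
    simp only [Prod.ext_iff] at ht
    simp [ht.2.1, ht.2.2]

lemma triples_card_eq_sum (Γ : SimpleGraph V) (col : Sym2 V → Fin 3) :
    (triples Γ col).card = ∑ p ∈ redPairs Γ col, dPlus Γ col p.1 p.2 := by
  have hmaps : ∀ t ∈ triples Γ col, (t.1, t.2.1) ∈ redPairs Γ col := by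
    intro t ht
    simp only [triples, Finset.mem_filter, Finset.mem_univ, true_and] at ht
    simp only [redPairs, Finset.mem_filter, Finset.mem_univ, true_and]
    exact ⟨ht.1, ht.2.1⟩
  rw [Finset.card_eq_sum_card_fiberwise hmaps]
  apply Finset.sum_congr rfl
  rintro ⟨u, v⟩ hp
  simp only [redPairs, Finset.mem_filter, Finset.mem_univ, true_and] at hp
  rw [dPlus]
  apply Finset.card_nbij' (fun t => t.2.2) (fun w => (u, v, w))
  · intro t ht
    simp only [Finset.mem_coe, Finset.mem_filter, triples, Finset.mem_univ, true_and] at ht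
    obtain ⟨u', v', w⟩ := t
    simp only [Prod.ext_iff] at ht
    obtain ⟨⟨h1, h2, h3, h4, h5, h6⟩, rfl, rfl⟩ := ht
    simp only [Finset.mem_coe, Finset.mem_filter, Finset.mem_univ, true_and]
    exact ⟨h3, h4, h5, h6⟩
  · intro w hw
    simp only [Finset.mem_coe, Finset.mem_filter, Finset.mem_univ, true_and] at hw
    simp only [Finset.mem_coe, Finset.mem_filter, triples, Finset.mem_univ, true_and]
    exact ⟨⟨hp.1, hp.2, hw.1, hw.2.1, hw.2.2.1, hw.2.2.2⟩, trivial⟩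
  · intro t ht
    simp only [Finset.mem_coe, Finset.mem_filter, triples, Finset.mem_univ, true_and] at ht
    obtain ⟨u', v', w⟩ := t
    simp only [Prod.ext_iff] at ht
    simp [ht.2.1, ht.2.2]
  · intro w hw; rfl

set_option maxHeartbeats 1000000 in
lemma triples_card_eq_T (Γ : SimpleGraph V) (col : Sym2 V → Fin 3) :
    (triples Γ col).card = (rainbowTriangles Γ col).card := by
  have hsym : ∀ a b : V, col s(a,b) = col s(b,a) := fun a b => by rw [Sym2.eq_swap]
  apply Finset.card_bij (fun t _ => ({t.1, t.2.1, t.2.2} : Finset V))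
  · intro t ht
    simp only [triples, Finset.mem_filter, Finset.mem_univ, true_and] at ht
    obtain ⟨u, v, w⟩ := t
    obtain ⟨h1, h2, h3, h4, h5, h6⟩ := ht
    simp only [rainbowTriangles, Finset.mem_filter, Finset.mem_univ, true_and]
    exact ⟨u, v, w, rfl, h1, h3, h5, by rw [h2, h4]; decide, by rw [h2, h6]; decide,
      by rw [h4, h6]; decide⟩
  · intro t ht t' ht' heq
    simp only [triples, Finset.mem_filter, Finset.mem_univ, true_and] at ht ht'
    obtain ⟨u, v, w⟩ := t
    obtain ⟨u', v', w'⟩ := t'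
    obtain ⟨h1, h2, h3, h4, h5, h6⟩ := ht
    obtain ⟨h1', h2', h3', h4', h5', h6'⟩ := ht'
    have huv := h1.ne
    have huw := h3.ne
    have hvw := h5.ne
    have hm : ∀ z : V, z ∈ ({u', v', w'} : Finset V) → z = u ∨ z = v ∨ z = w := by
      intro z hz
      rw [← heq] at hz
      simpa using hz
    have hu' := hm u' (by simp)
    have hv' := hm v' (by simp)
    have hw' := hm w' (by simp)
    have huv' := h1'.ne
    have huw' := h3'.ne
    have hvw' := h5'.ne
    have g1 : col s(v,u) = 0 := (hsym v u).trans h2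
    have g2 : col s(w,u) = 2 := (hsym w u).trans h4
    have g3 : col s(w,v) = 1 := (hsym w v).trans h6
    have g1' : col s(v',u') = 0 := (hsym v' u').trans h2'
    have g2' : col s(w',u') = 2 := (hsym w' u').trans h4'
    have g3' : col s(w',v') = 1 := (hsym w' v').trans h6'
    clear hsym heq
    simp only [Prod.ext_iff]
    rcases hu' with rfl | rfl | rfl <;> rcases hv' with rfl | rfl | rfl <;>
      rcases hw' with rfl | rfl | rfl <;>
      first
        | exact ⟨rfl, rfl, rfl⟩
        | simp_all
  · intro s hs
    simp only [rainbowTriangles, Finset.mem_filter, Finset.mem_univ, true_and] at hs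
    obtain ⟨a, b, c, rfl, hab, hac, hbc, n1, n2, n3⟩ := hs
    have h3 : ∀ x : Fin 3, x = 0 ∨ x = 1 ∨ x = 2 := by decide
    have hsab := h3 (col s(a,b))
    have hsac := h3 (col s(a,c))
    have hsbc := h3 (col s(b,c))
    have hset : ∀ x y z : V, ({x,y,z} : Finset V) = {y,x,z} := by
      intro x y z; ext w; simp; tauto
    have hset2 : ∀ x y z : V, ({x,y,z} : Finset V) = {z,x,y} := by
      intro x y z; ext w; simp; tauto
    rcases hsab with cab | cab | cab <;> rcases hsac with cac | cac | cac <;>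
      rcases hsbc with cbc | cbc | cbc <;>
      first
        | (exact absurd (cab.trans cac.symm) n1)
        | (exact absurd (cab.trans cbc.symm) n2)
        | (exact absurd (cac.trans cbc.symm) n3)
        | -- (0,1,2): t = (b,a,c)
          (exact ⟨(b, a, c), by
            simp only [triples, Finset.mem_filter, Finset.mem_univ, true_and]
            exact ⟨hab.symm, by rw [← hsym]; exact cab, hbc, cbc, hac, cac⟩,
            (by ext z; simp; tauto)⟩)
        | -- (0,2,1): t = (a,b,c)
          (exact ⟨(a, b, c), by
            simp only [triples, Finset.mem_filter, Finset.mem_univ, true_and]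
            exact ⟨hab, cab, hac, cac, hbc, cbc⟩, rfl⟩)
        | -- (1,0,2): t = (c,a,b)
          (exact ⟨(c, a, b), by
            simp only [triples, Finset.mem_filter, Finset.mem_univ, true_and]
            exact ⟨hac.symm, by rw [← hsym]; exact cac, hbc.symm, by rw [← hsym]; exact cbc,
              hab, cab⟩, (by ext z; simp; tauto)⟩)
        | -- (1,2,0): t = (c,b,a)
          (exact ⟨(c, b, a), by
            simp only [triples, Finset.mem_filter, Finset.mem_univ, true_and]
            exact ⟨hbc.symm, by rw [← hsym]; exact cbc, hac.symm, by rw [← hsym]; exact cac,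
              hab.symm, by rw [← hsym]; exact cab⟩, (by ext z; simp; tauto)⟩)
        | -- (2,0,1): t = (a,c,b)
          (exact ⟨(a, c, b), by
            simp only [triples, Finset.mem_filter, Finset.mem_univ, true_and]
            exact ⟨hac, cac, hab, cab, hbc.symm, by rw [← hsym]; exact cbc⟩,
            (by ext z; simp; tauto)⟩)
        | -- (2,1,0): t = (b,c,a)
          (exact ⟨(b, c, a), by
            simp only [triples, Finset.mem_filter, Finset.mem_univ, true_and]
            exact ⟨hbc, cbc, hab.symm, by rw [← hsym]; exact cab, hac.symm,
              by rw [← hsym]; exact cac⟩, (by ext z; simp; tauto)⟩)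


/-- A 3-edge-colored graph with `R` red, `G` green, `B` blue edges and `T` rainbow
triangles satisfies `T² ≤ 2·R·G·B`. -/
theorem stmt0 (Γ : SimpleGraph V) (col : Sym2 V → Fin 3) (R G B T : ℕ)
    (hR : R = (colorEdges Γ col 0).card)
    (hG : G = (colorEdges Γ col 1).card)
    (hB : B = (colorEdges Γ col 2).card)
    (hT : T = (rainbowTriangles Γ col).card) :
    T ^ 2 ≤ 2 * R * G * B := by
  subst hR hG hB hT
  have h1 : (rainbowTriangles Γ col).card = ∑ p ∈ redPairs Γ col, dPlus Γ col p.1 p.2 :=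
    (triples_card_eq_T Γ col).symm.trans (triples_card_eq_sum Γ col)
  rw [h1]
  have cs : (∑ p ∈ redPairs Γ col, dPlus Γ col p.1 p.2) ^ 2
      ≤ (redPairs Γ col).card * ∑ p ∈ redPairs Γ col, (dPlus Γ col p.1 p.2) ^ 2 := by
    have h := sq_sum_le_card_mul_sum_sq (s := redPairs Γ col)
      (f := fun p => (dPlus Γ col p.1 p.2 : ℤ))
    exact_mod_cast h
  calc (∑ p ∈ redPairs Γ col, dPlus Γ col p.1 p.2) ^ 2
      ≤ (redPairs Γ col).card * ∑ p ∈ redPairs Γ col, (dPlus Γ col p.1 p.2) ^ 2 := cs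
    _ ≤ (2 * (colorEdges Γ col 0).card) *
        ((colorEdges Γ col 1).card * (colorEdges Γ col 2).card) := by
        apply Nat.mul_le_mul (redPairs_card_le Γ col)
        rw [sum_dPlus_sq]
        exact tupleSet_card_le Γ col
    _ = 2 * (colorEdges Γ col 0).card * (colorEdges Γ col 1).card *
        (colorEdges Γ col 2).card := by ring

end RainbowTri
end
end

section
/- Let Γ be a finite simple graph each of whose edges is colored red, green, or blue, with R red edges, G green edges, and B blue edges. If the number of rainbow triangles of Γ equals √(2·R·G·B) and this number is positive, then Γ is obtained from a blowup of a properly 3-edge-colored K4 by possibly adding a set of isolated vertices. -/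
open scoped Classical

noncomputable section

namespace RainbowTri

variable {V : Type*} [Fintype V]

/-! ### Auxiliary lemmas -/

section Aux

-- pairColor / thirdColor combinatorics
def thirdColor (c1 c2 : Fin 3) : Fin 3 := ⟨(6 - c1.val - c2.val) % 3, Nat.mod_lt _ (by norm_num)⟩

def partner (i : Fin 4) (c : Fin 3) : Fin 4 :=
  ⟨(i.val ^^^ (c.val + 1)) % 4, Nat.mod_lt _ (by norm_num)⟩

lemma pc_symm : ∀ i j : Fin 4, pairColor i j = pairColor j i := by decide
lemma pc_inj : ∀ i j k : Fin 4, j ≠ i → k ≠ i → pairColor i j = pairColor i k → j = k := by decide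
lemma partner_ne : ∀ (i : Fin 4) (c : Fin 3), partner i c ≠ i := by decide
lemma pc_partner : ∀ (i : Fin 4) (c : Fin 3), pairColor i (partner i c) = c := by decide
lemma tc_eq : ∀ c1 c2 c3 : Fin 3, c1 ≠ c2 → c3 ≠ c1 → c3 ≠ c2 → c3 = thirdColor c1 c2 := by decide
lemma pc_triangle : ∀ i j k : Fin 4, i ≠ j → i ≠ k → j ≠ k →
    pairColor j k = thirdColor (pairColor i j) (pairColor i k) := by decide
lemma exists_k_avoid : ∀ i j : Fin 4, i ≠ j → ∀ c' : Fin 3,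
    ∃ k, k ≠ i ∧ k ≠ j ∧ pairColor j k ≠ c' := by decide
lemma exists_k_notmem : ∀ i j : Fin 4, ∃ k, k ≠ i ∧ k ≠ j := by decide
lemma fin3_third_unique : ∀ c1 c2 a b : Fin 3,
    c1 ≠ c2 → a ≠ c1 → a ≠ c2 → b ≠ c1 → b ≠ c2 → a = b := by decide

lemma exists_perm (c1 c2 : Fin 3) (h : c1 ≠ c2) :
    ∃ π : Equiv.Perm (Fin 3), π c1 = 2 ∧ π c2 = 1 := by
  classical
  have hinj : Function.Injective
      (fun x => if x = c1 then (2 : Fin 3) else if x = c2 then 1 else 0) := by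
    intro a b hab
    dsimp only at hab
    by_cases ha1 : a = c1
    · by_cases hb1 : b = c1
      · exact ha1.trans hb1.symm
      · exfalso
        rw [if_pos ha1, if_neg hb1] at hab
        by_cases hb2 : b = c2
        · rw [if_pos hb2] at hab; exact absurd hab (by decide)
        · rw [if_neg hb2] at hab; exact absurd hab (by decide)
    · by_cases hb1 : b = c1
      · exfalso
        rw [if_neg ha1, if_pos hb1] at hab
        by_cases ha2 : a = c2
        · rw [if_pos ha2] at hab; exact absurd hab (by decide)
        · rw [if_neg ha2] at hab; exact absurd hab (by decide)
      · by_cases ha2 : a = c2 <;> by_cases hb2 : b = c2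
        · exact ha2.trans hb2.symm
        · exfalso; rw [if_neg ha1, if_pos ha2, if_neg hb1, if_neg hb2] at hab
          exact absurd hab (by decide)
        · exfalso; rw [if_neg ha1, if_neg ha2, if_neg hb1, if_pos hb2] at hab
          exact absurd hab (by decide)
        · exact fin3_third_unique c1 c2 a b h ha1 ha2 hb1 hb2
  refine ⟨Equiv.ofBijective _ (Finite.injective_iff_bijective.mp hinj), ?_, ?_⟩
  · show (if c1 = c1 then (2 : Fin 3) else if c1 = c2 then 1 else 0) = 2
    rw [if_pos rfl]
  · show (if c2 = c1 then (2 : Fin 3) else if c2 = c2 then 1 else 0) = 1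
    rw [if_neg h.symm, if_pos rfl]

-- indicator sums
lemma sum_ite_card {α : Type*} [Fintype α] (Q : α → Prop) {D : ∀ x, Decidable (Q x)}
    {D' : DecidablePred Q} :
    (∑ x : α, @ite ℕ (Q x) (D x) 1 0) = (@Finset.filter α Q D' Finset.univ).card := by
  rw [Finset.card_filter]
  exact Finset.sum_congr rfl fun x _ => @if_congr _ _ _ (D x) (D' x) _ _ _ _ Iff.rfl rfl rfl

lemma sum_ite_prod {α β : Type*} [Fintype α] [Fintype β] (Q1 : α → Prop) (Q2 : β → Prop)
    {D : ∀ (x : α) (y : β), Decidable (Q1 x ∧ Q2 y)}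
    {D1 : DecidablePred Q1} {D2 : DecidablePred Q2} :
    (∑ x : α, ∑ y : β, @ite ℕ (Q1 x ∧ Q2 y) (D x y) 1 0)
      = (@Finset.filter α Q1 D1 Finset.univ).card * (@Finset.filter β Q2 D2 Finset.univ).card := by
  have step : ∀ x : α, (∑ y : β, @ite ℕ (Q1 x ∧ Q2 y) (D x y) 1 0)
      = (@ite ℕ (Q1 x) (D1 x) 1 0) * (@Finset.filter β Q2 D2 Finset.univ).card := by
    intro x
    by_cases h1 : Q1 x
    · rw [if_pos h1, one_mul, ← sum_ite_card Q2 (D := fun y => D2 y)]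
      exact Finset.sum_congr rfl fun y _ =>
        @if_congr _ _ _ (D x y) (D2 y) _ _ _ _ (by tauto) rfl rfl
    · rw [if_neg h1, zero_mul]
      exact Finset.sum_eq_zero fun y _ => by rw [if_neg (fun h => h1 h.1)]
  rw [Finset.sum_congr rfl fun x (_ : x ∈ (Finset.univ : Finset α)) => step x,
    ← Finset.sum_mul, sum_ite_card Q1 (D := fun x => D1 x)]

-- color subgraph and doubled edge count
def csub (Γ : SimpleGraph V) (col : Sym2 V → Fin 3) (c : Fin 3) : SimpleGraph V where
  Adj u v := Γ.Adj u v ∧ col s(u, v) = c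
  symm := ⟨fun u v h => ⟨h.1.symm, by rw [Sym2.eq_swap]; exact h.2⟩⟩
  loopless := ⟨fun u h => Γ.irrefl h.1⟩

lemma colorEdges_eq_sub (Γ : SimpleGraph V) (col : Sym2 V → Fin 3) (c : Fin 3) :
    colorEdges Γ col c = (csub Γ col c).edgeFinset := by
  ext e
  induction e with
  | _ u v =>
    rw [SimpleGraph.mem_edgeFinset]
    simp [colorEdges, SimpleGraph.mem_edgeFinset, SimpleGraph.mem_edgeSet, csub]

lemma two_mul_colorEdges (Γ : SimpleGraph V) (col : Sym2 V → Fin 3) (c : Fin 3) :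
    2 * (colorEdges Γ col c).card
      = (Finset.univ.filter fun p : V × V => Γ.Adj p.1 p.2 ∧ col s(p.1, p.2) = c).card := by
  rw [colorEdges_eq_sub, SimpleGraph.two_mul_card_edgeFinset]
  congr 1
  apply Finset.filter_congr
  intro p _
  rfl

-- counting: triples and tuples
lemma card_triples (Γ : SimpleGraph V) (col : Sym2 V → Fin 3) :
    (Finset.univ.filter fun t : V × V × V =>
      (Γ.Adj t.1 t.2.1 ∧ col s(t.1, t.2.1) = 0) ∧
      Γ.Adj t.1 t.2.2 ∧ col s(t.1, t.2.2) = 2 ∧ Γ.Adj t.2.1 t.2.2 ∧ col s(t.2.1, t.2.2) = 1).card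
    = ∑ p ∈ redPairs Γ col, dPlus Γ col p.1 p.2 := by
  rw [Finset.card_filter, Fintype.sum_prod_type]
  have h : ∀ u v : V, ∑ w : V,
      (if (Γ.Adj u v ∧ col s(u, v) = 0) ∧
        Γ.Adj u w ∧ col s(u, w) = 2 ∧ Γ.Adj v w ∧ col s(v, w) = 1 then (1:ℕ) else 0)
      = if Γ.Adj u v ∧ col s(u, v) = 0 then dPlus Γ col u v else 0 := by
    intro u v
    by_cases hr : Γ.Adj u v ∧ col s(u, v) = 0
    · simp only [hr, true_and, if_true, dPlus, Finset.card_filter]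
    · simp [hr]
  calc ∑ u : V, ∑ q : V × V, (if (Γ.Adj u q.1 ∧ col s(u, q.1) = 0) ∧
        Γ.Adj u q.2 ∧ col s(u, q.2) = 2 ∧ Γ.Adj q.1 q.2 ∧ col s(q.1, q.2) = 1 then (1:ℕ) else 0)
      = ∑ u : V, ∑ v : V, (if Γ.Adj u v ∧ col s(u, v) = 0 then dPlus Γ col u v else 0) := by
        refine Finset.sum_congr rfl fun u _ => ?_
        rw [Fintype.sum_prod_type]
        exact Finset.sum_congr rfl fun v _ => h u v
    _ = ∑ p : V × V, (if Γ.Adj p.1 p.2 ∧ col s(p.1, p.2) = 0 then dPlus Γ col p.1 p.2 else 0) := by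
        rw [Fintype.sum_prod_type]
    _ = ∑ p ∈ redPairs Γ col, dPlus Γ col p.1 p.2 := by
        rw [redPairs, Finset.sum_filter]

lemma card_tupleSet (Γ : SimpleGraph V) (col : Sym2 V → Fin 3) :
    (tupleSet Γ col).card = ∑ p ∈ redPairs Γ col, (dPlus Γ col p.1 p.2) ^ 2 := by
  rw [tupleSet, Finset.card_filter, Fintype.sum_prod_type]
  have h : ∀ u v : V, ∑ q : V × V,
      (if Γ.Adj u v ∧ col s(u, v) = 0 ∧
        Γ.Adj u q.1 ∧ col s(u, q.1) = 2 ∧ Γ.Adj u q.2 ∧ col s(u, q.2) = 2 ∧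
        Γ.Adj v q.1 ∧ col s(v, q.1) = 1 ∧ Γ.Adj v q.2 ∧ col s(v, q.2) = 1 then (1:ℕ) else 0)
      = if Γ.Adj u v ∧ col s(u, v) = 0 then (dPlus Γ col u v) ^ 2 else 0 := by
    intro u v
    by_cases hr : Γ.Adj u v ∧ col s(u, v) = 0
    · rw [if_pos hr]
      have e1 : ∀ q : V × V, (if (Γ.Adj u v ∧ col s(u, v) = 0 ∧
          Γ.Adj u q.1 ∧ col s(u, q.1) = 2 ∧ Γ.Adj u q.2 ∧ col s(u, q.2) = 2 ∧
          Γ.Adj v q.1 ∧ col s(v, q.1) = 1 ∧ Γ.Adj v q.2 ∧ col s(v, q.2) = 1) then (1:ℕ) else 0)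
          = (if ((Γ.Adj u q.1 ∧ col s(u, q.1) = 2 ∧ Γ.Adj v q.1 ∧ col s(v, q.1) = 1) ∧
             (Γ.Adj u q.2 ∧ col s(u, q.2) = 2 ∧ Γ.Adj v q.2 ∧ col s(v, q.2) = 1)) then (1:ℕ) else 0) := by
        intro q
        refine if_congr ?_ rfl rfl
        constructor
        · rintro ⟨_, _, h1, h2, h3, h4, h5, h6, h7, h8⟩; exact ⟨⟨h1, h2, h5, h6⟩, h3, h4, h7, h8⟩
        · rintro ⟨⟨h1, h2, h5, h6⟩, h3, h4, h7, h8⟩; exact ⟨hr.1, hr.2, h1, h2, h3, h4, h5, h6, h7, h8⟩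
      have e2 := Finset.sum_congr rfl (fun q (_ : q ∈ (Finset.univ : Finset (V × V))) => e1 q)
      rw [e2]
      rw [Fintype.sum_prod_type]
      simp only [dPlus, pow_two]
      exact sum_ite_prod _ _
    · rw [if_neg hr]
      refine Finset.sum_eq_zero fun q _ => ?_
      rw [if_neg]
      rintro ⟨h1, h2, -⟩; exact hr ⟨h1, h2⟩
  calc ∑ u : V, ∑ q : V × V × V, _
      = ∑ u : V, ∑ v : V, (if Γ.Adj u v ∧ col s(u, v) = 0 then (dPlus Γ col u v) ^ 2 else 0) := by
        refine Finset.sum_congr rfl fun u _ => ?_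
        rw [Fintype.sum_prod_type]
        exact Finset.sum_congr rfl fun v _ => h u v
    _ = ∑ p : V × V, (if Γ.Adj p.1 p.2 ∧ col s(p.1, p.2) = 0 then (dPlus Γ col p.1 p.2) ^ 2 else 0) := by
        rw [Fintype.sum_prod_type]
    _ = ∑ p ∈ redPairs Γ col, (dPlus Γ col p.1 p.2) ^ 2 := by
        rw [redPairs, Finset.sum_filter]

-- reorientation of a rainbow triangle
lemma fin3_cases : ∀ c1 c2 c3 : Fin 3, c1 ≠ c2 → c1 ≠ c3 → c2 ≠ c3 →
    (c1 = 0 ∧ c2 = 1 ∧ c3 = 2) ∨ (c1 = 0 ∧ c2 = 2 ∧ c3 = 1) ∨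
    (c1 = 1 ∧ c2 = 0 ∧ c3 = 2) ∨ (c1 = 1 ∧ c2 = 2 ∧ c3 = 0) ∨
    (c1 = 2 ∧ c2 = 0 ∧ c3 = 1) ∨ (c1 = 2 ∧ c2 = 1 ∧ c3 = 0) := by decide

lemma reorient {Γ : SimpleGraph V} {col : Sym2 V → Fin 3} {a b c : V}
    (hab : Γ.Adj a b) (hac : Γ.Adj a c) (hbc : Γ.Adj b c)
    (h1 : col s(a, b) ≠ col s(a, c)) (h2 : col s(a, b) ≠ col s(b, c))
    (h3 : col s(a, c) ≠ col s(b, c)) :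
    ∃ u v w : V, ({u, v, w} : Finset V) = {a, b, c} ∧ Γ.Adj u v ∧ Γ.Adj u w ∧ Γ.Adj v w ∧
      col s(u, v) = 0 ∧ col s(u, w) = 2 ∧ col s(v, w) = 1 := by
  have sab : s(b, a) = s(a, b) := Sym2.eq_swap
  have sac : s(c, a) = s(a, c) := Sym2.eq_swap
  have sbc : s(c, b) = s(b, c) := Sym2.eq_swap
  rcases fin3_cases _ _ _ h1 h2 h3 with ⟨e1, e2, e3⟩ | ⟨e1, e2, e3⟩ | ⟨e1, e2, e3⟩ |
    ⟨e1, e2, e3⟩ | ⟨e1, e2, e3⟩ | ⟨e1, e2, e3⟩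
  · exact ⟨b, a, c, by ext x; simp only [Finset.mem_insert, Finset.mem_singleton]; tauto,
      hab.symm, hbc, hac, by rw [sab]; exact e1, e3, e2⟩
  · exact ⟨a, b, c, rfl, hab, hac, hbc, e1, e2, e3⟩
  · exact ⟨c, a, b, by ext x; simp only [Finset.mem_insert, Finset.mem_singleton]; tauto,
      hac.symm, hbc.symm, hab, by rw [sac]; exact e2, by rw [sbc]; exact e3, e1⟩
  · exact ⟨c, b, a, by ext x; simp only [Finset.mem_insert, Finset.mem_singleton]; tauto,
      hbc.symm, hac.symm, hab.symm, by rw [sbc]; exact e3, by rw [sac]; exact e2,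
      by rw [sab]; exact e1⟩
  · exact ⟨a, c, b, by ext x; simp only [Finset.mem_insert, Finset.mem_singleton]; tauto,
      hac, hab, hbc.symm, e2, e1, by rw [sbc]; exact e3⟩
  · exact ⟨b, c, a, by ext x; simp only [Finset.mem_insert, Finset.mem_singleton]; tauto,
      hbc, hab.symm, hac.symm, e3, by rw [sab]; exact e1, by rw [sac]; exact e2⟩

lemma card_rainbow_eq (Γ : SimpleGraph V) (col : Sym2 V → Fin 3) :
    (Finset.univ.filter fun t : V × V × V =>
      (Γ.Adj t.1 t.2.1 ∧ col s(t.1, t.2.1) = 0) ∧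
      Γ.Adj t.1 t.2.2 ∧ col s(t.1, t.2.2) = 2 ∧ Γ.Adj t.2.1 t.2.2 ∧ col s(t.2.1, t.2.2) = 1).card
    = (rainbowTriangles Γ col).card := by
  refine Finset.card_bij (fun t _ => ({t.1, t.2.1, t.2.2} : Finset V)) ?_ ?_ ?_
  · rintro ⟨u, v, w⟩ ht
    simp only [Finset.mem_filter] at ht
    obtain ⟨-, ⟨huv, cuv⟩, huw, cuw, hvw, cvw⟩ := ht
    simp only [rainbowTriangles, Finset.mem_filter, Finset.mem_univ, true_and]
    exact ⟨u, v, w, rfl, huv, huw, hvw, by rw [cuv, cuw]; decide,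
      by rw [cuv, cvw]; decide, by rw [cuw, cvw]; decide⟩
  · rintro ⟨u, v, w⟩ ht ⟨u', v', w'⟩ ht' h
    simp only [Finset.mem_filter, Finset.mem_univ, true_and] at ht ht'
    obtain ⟨⟨huv, cuv⟩, huw, cuw, hvw, cvw⟩ := ht
    obtain ⟨⟨huv', cuv'⟩, huw', cuw', hvw', cvw'⟩ := ht'
    have h' : ({u, v, w} : Finset V) = {u', v', w'} := h
    have swp : ∀ x y : V, s(x, y) = s(y, x) := fun _ _ => Sym2.eq_swap
    have hne1' : u' ≠ v' := huv'.ne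
    have hne2' : u' ≠ w' := huw'.ne
    have hne3' : v' ≠ w' := hvw'.ne
    have hu' : u' = u ∨ u' = v ∨ u' = w := by
      have : u' ∈ ({u, v, w} : Finset V) := h' ▸ (by simp)
      simpa using this
    have hv' : v' = u ∨ v' = v ∨ v' = w := by
      have : v' ∈ ({u, v, w} : Finset V) := h' ▸ (by simp)
      simpa using this
    have hw' : w' = u ∨ w' = v ∨ w' = w := by
      have : w' ∈ ({u, v, w} : Finset V) := h' ▸ (by simp)
      simpa using this
    have goal : u' = u ∧ v' = v ∧ w' = w := by
      rcases hu' with rfl | rfl | rfl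
      · rcases hv' with rfl | rfl | rfl
        · exact (hne1' rfl).elim
        · refine ⟨rfl, rfl, ?_⟩
          rcases hw' with rfl | rfl | rfl
          · exact (hne2' rfl).elim
          · exact (hne3' rfl).elim
          · rfl
        · exact absurd (cuv'.symm.trans cuw) (by decide)
      · exfalso
        rcases hv' with rfl | rfl | rfl
        · rcases hw' with rfl | rfl | rfl
          · exact hne3' rfl
          · exact hne2' rfl
          · exact absurd (cuw'.symm.trans cvw) (by decide)
        · exact hne1' rfl
        · exact absurd (cuv'.symm.trans cvw) (by decide)
      · exfalso
        rcases hv' with rfl | rfl | rfl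
        · rw [swp] at cuv'; exact absurd (cuv'.symm.trans cuw) (by decide)
        · rw [swp] at cuv'; exact absurd (cuv'.symm.trans cvw) (by decide)
        · exact hne1' rfl
    obtain ⟨e1, e2, e3⟩ := goal
    simp [e1, e2, e3]
  · intro s hs
    simp only [rainbowTriangles, Finset.mem_filter, Finset.mem_univ, true_and] at hs
    obtain ⟨a, b, c, rfl, hab, hac, hbc, h1, h2, h3⟩ := hs
    obtain ⟨u, v, w, hset, huv, huw, hvw, c1, c2, c3⟩ := reorient hab hac hbc h1 h2 h3
    exact ⟨(u, v, w), by simp [Finset.mem_filter, huv, huw, hvw, c1, c2, c3], hset⟩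

-- Cauchy-Schwarz equality case
lemma cauchy_eq_case {ι : Type*} (s : Finset ι) (f : ι → ℤ)
    (h : (∑ a ∈ s, f a)^2 = s.card * ∑ a ∈ s, (f a)^2) :
    ∀ a ∈ s, ∀ b ∈ s, f a = f b := by
  have inner : ∀ a, ∑ b ∈ s, (f a - f b)^2
      = s.card * f a^2 - 2 * f a * (∑ b ∈ s, f b) + (∑ b ∈ s, f b^2) := by
    intro a
    have e : ∀ b ∈ s, (f a - f b)^2 = f a^2 - 2 * f a * f b + f b^2 := fun b _ => by ring
    rw [Finset.sum_congr rfl e, Finset.sum_add_distrib, Finset.sum_sub_distrib,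
      Finset.sum_const, ← Finset.mul_sum, nsmul_eq_mul]
  have key : ∑ a ∈ s, ∑ b ∈ s, (f a - f b)^2 = 0 := by
    rw [Finset.sum_congr rfl fun a _ => inner a]
    rw [Finset.sum_add_distrib, Finset.sum_sub_distrib, Finset.sum_const, ← Finset.mul_sum]
    have e2 : ∑ a ∈ s, 2 * f a * (∑ b ∈ s, f b) = 2 * (∑ a ∈ s, f a)^2 := by
      rw [← Finset.sum_mul]
      have : ∑ a ∈ s, 2 * f a = 2 * ∑ a ∈ s, f a := by rw [Finset.mul_sum]
      rw [this]; ring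
    rw [e2, nsmul_eq_mul, ← h]
    ring
  intro a ha b hb
  have h1 : ∀ a ∈ s, (0:ℤ) ≤ ∑ b ∈ s, (f a - f b)^2 :=
    fun a _ => Finset.sum_nonneg fun b _ => sq_nonneg _
  have h2 := (Finset.sum_eq_zero_iff_of_nonneg h1).1 key a ha
  have h3 := (Finset.sum_eq_zero_iff_of_nonneg (fun b _ => sq_nonneg (f a - f b))).1 h2 b hb
  have := sq_eq_zero_iff.1 h3
  linarith

end Aux


section Main
variable (Γ : SimpleGraph V) (col : Sym2 V → Fin 3)

/-- The hypothesis of the equality case. -/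
def Good : Prop :=
  ((rainbowTriangles Γ col).card)^2
    = 2 * (colorEdges Γ col 0).card * (colorEdges Γ col 1).card * (colorEdges Γ col 2).card
  ∧ 0 < (rainbowTriangles Γ col).card

lemma mem_tupleSet_iff (t : V × V × V × V) :
    t ∈ tupleSet Γ col ↔ (Γ.Adj t.1 t.2.1 ∧ col s(t.1, t.2.1) = 0 ∧
      Γ.Adj t.1 t.2.2.1 ∧ col s(t.1, t.2.2.1) = 2 ∧
      Γ.Adj t.1 t.2.2.2 ∧ col s(t.1, t.2.2.2) = 2 ∧
      Γ.Adj t.2.1 t.2.2.1 ∧ col s(t.2.1, t.2.2.1) = 1 ∧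
      Γ.Adj t.2.1 t.2.2.2 ∧ col s(t.2.1, t.2.2.2) = 1) := by
  simp [tupleSet]

lemma mem_colorEdges_iff (a b : V) (c : Fin 3) :
    s(a, b) ∈ colorEdges Γ col c ↔ Γ.Adj a b ∧ col s(a, b) = c := by
  simp [colorEdges, SimpleGraph.mem_edgeSet]

lemma tuple_maps : ∀ t ∈ tupleSet Γ col,
    (s(t.1, t.2.2.1), s(t.2.1, t.2.2.2)) ∈ (colorEdges Γ col 2) ×ˢ (colorEdges Γ col 1) := by
  rintro ⟨u, v, x, y⟩ ht
  rw [mem_tupleSet_iff] at ht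
  obtain ⟨h1, h2, h3, h4, h5, h6, h7, h8, h9, h10⟩ := ht
  rw [Finset.mem_product]
  exact ⟨(mem_colorEdges_iff Γ col u x 2).2 ⟨h3, h4⟩, (mem_colorEdges_iff Γ col v y 1).2 ⟨h9, h10⟩⟩

lemma tuple_inj : Set.InjOn (fun t : V × V × V × V => (s(t.1, t.2.2.1), s(t.2.1, t.2.2.2)))
    (tupleSet Γ col : Set (V × V × V × V)) := by
  rintro ⟨u, v, x, y⟩ ht ⟨u', v', x', y'⟩ ht' h
  rw [Finset.mem_coe, mem_tupleSet_iff] at ht ht'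
  obtain ⟨a1, a2, a3, a4, a5, a6, a7, a8, a9, a10⟩ := ht
  obtain ⟨b1, b2, b3, b4, b5, b6, b7, b8, b9, b10⟩ := ht'
  have swp : ∀ p q : V, s(p, q) = s(q, p) := fun _ _ => Sym2.eq_swap
  have h1 : s(u, x) = s(u', x') := congrArg Prod.fst h
  have h2 : s(v, y) = s(v', y') := congrArg Prod.snd h
  have e1 : (u = u' ∧ x = x') ∨ (u = x' ∧ x = u') := Sym2.eq_iff.1 h1
  have e2 : (v = v' ∧ y = y') ∨ (v = y' ∧ y = v') := Sym2.eq_iff.1 h2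
  rcases e1 with ⟨rfl, rfl⟩ | ⟨rfl, rfl⟩
  · rcases e2 with ⟨rfl, rfl⟩ | ⟨rfl, rfl⟩
    · rfl
    · -- v = y', y = v' ; b2 : col s(u,v') = 0 but a6 : col s(u, v') = 2 (y := v')
      exact absurd (b2.symm.trans a6) (by decide)
  · -- u = x', x = u'
    rcases e2 with ⟨rfl, rfl⟩ | ⟨rfl, rfl⟩
    ·
      exfalso
      rw [swp] at b2
      exact absurd (b2.symm.trans a8) (by decide)
    · exfalso
      rw [swp] at b6
      exact absurd (b6.symm.trans a8) (by decide)

lemma mainEq (hG : Good Γ col) :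
    (∀ u v : V, Γ.Adj u v → col s(u, v) = 0 → 0 < dPlus Γ col u v) ∧
    (∀ e ∈ colorEdges Γ col 2, ∀ f ∈ colorEdges Γ col 1,
      ∃ t ∈ tupleSet Γ col, s(t.1, t.2.2.1) = e ∧ s(t.2.1, t.2.2.2) = f) := by
  classical
  obtain ⟨hsq, hpos⟩ := hG
  set T := (rainbowTriangles Γ col).card with hTdef
  set R := (colorEdges Γ col 0).card with hRdef
  set G := (colorEdges Γ col 1).card with hGdef
  set B := (colorEdges Γ col 2).card with hBdef
  have hR : 0 < R := by
    rcases Nat.eq_zero_or_pos R with h | h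
    · exfalso; rw [h] at hsq; simp at hsq; omega
    · exact h
  have hT1 : T = ∑ p ∈ redPairs Γ col, dPlus Γ col p.1 p.2 :=
    (card_rainbow_eq Γ col).symm.trans (card_triples Γ col)
  have hn : (redPairs Γ col).card = 2 * R := by
    rw [hRdef, two_mul_colorEdges, redPairs]
  have hS : (tupleSet Γ col).card = ∑ p ∈ redPairs Γ col, (dPlus Γ col p.1 p.2) ^ 2 :=
    card_tupleSet Γ col
  have hSle : (tupleSet Γ col).card ≤ B * G := by
    have := Finset.card_le_card_of_injOn _ (tuple_maps Γ col) (tuple_inj Γ col)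
    rwa [Finset.card_product] at this
  -- Cauchy-Schwarz over ℤ
  have cauchy : ((T : ℤ))^2 ≤ (2 * R : ℕ) * ∑ p ∈ redPairs Γ col, ((dPlus Γ col p.1 p.2 : ℤ))^2 := by
    have := sq_sum_le_card_mul_sum_sq (s := redPairs Γ col)
      (f := fun p => (dPlus Γ col p.1 p.2 : ℤ))
    rw [hn] at this
    calc ((T : ℤ))^2 = (∑ p ∈ redPairs Γ col, ((dPlus Γ col p.1 p.2 : ℤ)))^2 := by
          rw [hT1]; push_cast; ring
      _ ≤ _ := this
  have hsum_sq : (∑ p ∈ redPairs Γ col, ((dPlus Γ col p.1 p.2 : ℤ))^2)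
      = ((tupleSet Γ col).card : ℤ) := by
    rw [hS]; push_cast; ring
  -- the chain of (in)equalities
  have key : ((T:ℤ))^2 = (2 * R : ℕ) * ((tupleSet Γ col).card : ℤ) ∧
      (tupleSet Γ col).card = B * G := by
    have h1 : ((T:ℤ))^2 ≤ (2 * R : ℕ) * ((tupleSet Γ col).card : ℤ) := by
      rw [← hsum_sq]; exact cauchy
    have h2 : ((2 * R : ℕ) : ℤ) * ((tupleSet Γ col).card : ℤ) ≤ ((2 * R : ℕ) : ℤ) * ((B * G : ℕ) : ℤ) := by
      have := hSle
      exact mul_le_mul_of_nonneg_left (by exact_mod_cast this) (by positivity)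
    have h3 : ((2 * R : ℕ) : ℤ) * ((B * G : ℕ) : ℤ) = ((T:ℤ))^2 := by
      push_cast
      rw_mod_cast [hsq]
      push_cast
      ring
    constructor
    · omega
    · have h4 : ((2 * R : ℕ) : ℤ) * ((tupleSet Γ col).card : ℤ) = ((2 * R : ℕ) : ℤ) * ((B * G : ℕ) : ℤ) := by omega
      have h5 : ((tupleSet Γ col).card : ℤ) = ((B * G : ℕ) : ℤ) := by
        have hRne : ((2 * R : ℕ) : ℤ) ≠ 0 := by
          have : (0:ℤ) < ((2 * R : ℕ) : ℤ) := by exact_mod_cast Nat.mul_pos (by norm_num) hR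
          omega
        exact mul_left_cancel₀ hRne h4
      exact_mod_cast h5
  obtain ⟨keq, hcard⟩ := key
  -- constancy of dPlus on red pairs
  have heq2 : (∑ p ∈ redPairs Γ col, ((dPlus Γ col p.1 p.2 : ℤ)))^2
      = (redPairs Γ col).card * ∑ p ∈ redPairs Γ col, ((dPlus Γ col p.1 p.2 : ℤ))^2 := by
    have e : (∑ p ∈ redPairs Γ col, ((dPlus Γ col p.1 p.2 : ℤ))) = (T:ℤ) := by
      rw [hT1]; push_cast; ring
    rw [e, hn, hsum_sq]
    exact keq
  have hconst' := cauchy_eq_case (redPairs Γ col) (fun p => (dPlus Γ col p.1 p.2 : ℤ)) heq2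
  have hconst : ∀ p ∈ redPairs Γ col, ∀ q ∈ redPairs Γ col,
      dPlus Γ col p.1 p.2 = dPlus Γ col q.1 q.2 := by
    intro p hp q hq
    have := hconst' p hp q hq
    exact_mod_cast this
  constructor
  · intro u v huv hcol
    have hp : (u, v) ∈ redPairs Γ col := by
      simp [redPairs, huv, hcol]
    by_contra hzero
    push_neg at hzero
    have hz : dPlus Γ col u v = 0 := Nat.le_zero.1 hzero
    have hall : ∀ q ∈ redPairs Γ col, dPlus Γ col q.1 q.2 = 0 := by
      intro q hq
      rw [hconst q hq (u, v) hp]; exact hz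
    have : T = 0 := by rw [hT1]; exact Finset.sum_eq_zero hall
    omega
  · -- surjectivity
    intro e he f hf
    have himg : (tupleSet Γ col).image (fun t => (s(t.1, t.2.2.1), s(t.2.1, t.2.2.2)))
        = (colorEdges Γ col 2) ×ˢ (colorEdges Γ col 1) := by
      apply Finset.eq_of_subset_of_card_le
      · intro p hp
        rw [Finset.mem_image] at hp
        obtain ⟨t, ht, rfl⟩ := hp
        exact tuple_maps Γ col t ht
      · rw [Finset.card_product, Finset.card_image_of_injOn (tuple_inj Γ col), hcard]
    have : (e, f) ∈ (tupleSet Γ col).image (fun t => (s(t.1, t.2.2.1), s(t.2.1, t.2.2.2))) := by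
      rw [himg, Finset.mem_product]; exact ⟨he, hf⟩
    rw [Finset.mem_image] at this
    obtain ⟨t, ht, hte⟩ := this
    exact ⟨t, ht, congrArg Prod.fst hte, congrArg Prod.snd hte⟩

end Main


section Star
variable (Γ : SimpleGraph V) (col : Sym2 V → Fin 3)

lemma rainbow_perm (π : Equiv.Perm (Fin 3)) :
    rainbowTriangles Γ (fun e => π (col e)) = rainbowTriangles Γ col := by
  unfold rainbowTriangles
  apply Finset.filter_congr
  intro s _
  constructor
  · rintro ⟨a, b, c, rfl, h1, h2, h3, n1, n2, n3⟩
    exact ⟨a, b, c, rfl, h1, h2, h3,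
      fun h => n1 (congrArg π h), fun h => n2 (congrArg π h), fun h => n3 (congrArg π h)⟩
  · rintro ⟨a, b, c, rfl, h1, h2, h3, n1, n2, n3⟩
    exact ⟨a, b, c, rfl, h1, h2, h3,
      fun h => n1 (π.injective h), fun h => n2 (π.injective h), fun h => n3 (π.injective h)⟩

lemma colorEdges_perm (π : Equiv.Perm (Fin 3)) (c : Fin 3) :
    colorEdges Γ (fun e => π (col e)) c = colorEdges Γ col (π.symm c) := by
  unfold colorEdges
  apply Finset.filter_congr
  intro e _
  constructor
  · rintro ⟨h1, h2⟩
    refine ⟨h1, ?_⟩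
    have h2' : π (col e) = c := h2
    rw [← h2', Equiv.symm_apply_apply]
  · rintro ⟨h1, h2⟩
    refine ⟨h1, ?_⟩
    show π (col e) = c
    rw [h2, Equiv.apply_symm_apply]

lemma good_perm (π : Equiv.Perm (Fin 3)) (hG : Good Γ col) :
    Good Γ (fun e => π (col e)) := by
  obtain ⟨hsq, hpos⟩ := hG
  constructor
  · rw [rainbow_perm, colorEdges_perm, colorEdges_perm, colorEdges_perm]
    have hprod : (colorEdges Γ col (π.symm 0)).card * (colorEdges Γ col (π.symm 1)).card
        * (colorEdges Γ col (π.symm 2)).card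
        = (colorEdges Γ col 0).card * (colorEdges Γ col 1).card * (colorEdges Γ col 2).card := by
      calc (colorEdges Γ col (π.symm 0)).card * (colorEdges Γ col (π.symm 1)).card
            * (colorEdges Γ col (π.symm 2)).card
          = ∏ c : Fin 3, (colorEdges Γ col (π.symm c)).card :=
            (Fin.prod_univ_three (fun c => (colorEdges Γ col (π.symm c)).card)).symm
        _ = ∏ c : Fin 3, (colorEdges Γ col c).card :=
            Equiv.prod_comp π.symm (fun c => (colorEdges Γ col c).card)
        _ = (colorEdges Γ col 0).card * (colorEdges Γ col 1).card * (colorEdges Γ col 2).card :=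
            Fin.prod_univ_three (fun c => (colorEdges Γ col c).card)
    rw [mul_assoc, mul_assoc] at hsq ⊢
    rw [← mul_assoc ((colorEdges Γ col (π.symm 0)).card), ← mul_assoc ((colorEdges Γ col 0).card) ] at *
    rw [hprod]
    exact hsq
  · rwa [rainbow_perm]

lemma starLemma {Γ : SimpleGraph V} {col : Sym2 V → Fin 3} (hG : Good Γ col)
    {c1 c2 : Fin 3} (h12 : c1 ≠ c2) {p x y : V}
    (hpx : Γ.Adj p x) (hcpx : col s(p, x) = c1)
    (hpy : Γ.Adj p y) (hcpy : col s(p, y) = c2) :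
    Γ.Adj x y ∧ col s(x, y) = thirdColor c1 c2 := by
  obtain ⟨π, hπ1, hπ2⟩ := exists_perm c1 c2 h12
  have hG' := good_perm Γ col π hG
  have hB := (mainEq Γ (fun e => π (col e)) hG').2
  have he : s(p, x) ∈ colorEdges Γ (fun e => π (col e)) 2 :=
    (mem_colorEdges_iff Γ _ p x 2).2 ⟨hpx, by rw [hcpx]; exact hπ1⟩
  have hf : s(p, y) ∈ colorEdges Γ (fun e => π (col e)) 1 :=
    (mem_colorEdges_iff Γ _ p y 1).2 ⟨hpy, by rw [hcpy]; exact hπ2⟩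
  obtain ⟨t, ht, h1, h2⟩ := hB _ he _ hf
  obtain ⟨u, v, w1, w2⟩ := t
  rw [mem_tupleSet_iff] at ht
  obtain ⟨a1, a2, a3, a4, a5, a6, a7, a8, a9, a10⟩ := ht
  simp only at h1 h2 a1 a2 a3 a4 a5 a6 a7 a8 a9 a10
  rcases Sym2.eq_iff.1 h1 with ⟨rfl, rfl⟩ | ⟨rfl, rfl⟩
  · rcases Sym2.eq_iff.1 h2 with ⟨rfl, rfl⟩ | ⟨rfl, rfl⟩
    · exact absurd a1 (Γ.irrefl)
    · exact absurd a5 (Γ.irrefl)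
  · rcases Sym2.eq_iff.1 h2 with ⟨rfl, rfl⟩ | ⟨rfl, rfl⟩
    · exact absurd a7 (Γ.irrefl)
    · refine ⟨a1, ?_⟩
      have hne1 : col s(u, v) ≠ c1 := by
        intro hc
        rw [hc, hπ1] at a2
        exact absurd a2 (by decide)
      have hne2 : col s(u, v) ≠ c2 := by
        intro hc
        rw [hc, hπ2] at a2
        exact absurd a2 (by decide)
      exact tc_eq c1 c2 _ h12 hne1 hne2

lemma starStar {Γ : SimpleGraph V} {col : Sym2 V → Fin 3} (hG : Good Γ col)
    {c1 c2 : Fin 3} (h12 : c1 ≠ c2) {a b a' b' : V}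
    (h1 : Γ.Adj a b) (hc1 : col s(a, b) = c1)
    (h2 : Γ.Adj a' b') (hc2 : col s(a', b') = c2) :
    ∃ u w : V, (u = a ∨ u = b) ∧ (w = a' ∨ w = b') ∧ Γ.Adj u w := by
  obtain ⟨π, hπ1, hπ2⟩ := exists_perm c2 c1 h12.symm
  have hG' := good_perm Γ col π hG
  have hB := (mainEq Γ (fun e => π (col e)) hG').2
  have he : s(a, b) ∈ colorEdges Γ (fun e => π (col e)) 1 :=
    (mem_colorEdges_iff Γ _ a b 1).2 ⟨h1, by rw [hc1]; exact hπ2⟩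
  have hf : s(a', b') ∈ colorEdges Γ (fun e => π (col e)) 2 :=
    (mem_colorEdges_iff Γ _ a' b' 2).2 ⟨h2, by rw [hc2]; exact hπ1⟩
  obtain ⟨t, ht, he1, he2⟩ := hB _ hf _ he
  obtain ⟨u, v, w1, w2⟩ := t
  rw [mem_tupleSet_iff] at ht
  obtain ⟨a1, -, -, -, -, -, -, -, -, -⟩ := ht
  simp only at he1 he2 a1
  -- he1 : s(u, w1) = s(a', b'), he2 : s(v, w2) = s(a, b), a1 : Γ.Adj u v
  refine ⟨v, u, ?_, ?_, a1.symm⟩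
  · rcases Sym2.eq_iff.1 he2 with ⟨rfl, -⟩ | ⟨rfl, -⟩
    · left; rfl
    · right; rfl
  · rcases Sym2.eq_iff.1 he1 with ⟨rfl, -⟩ | ⟨rfl, -⟩
    · left; rfl
    · right; rfl

end Star


section Pattern

lemma tc_ne_right : ∀ c1 c2 : Fin 3, c1 ≠ c2 → thirdColor c1 c2 ≠ c2 := by decide

def IsPatternK4 (Γ : SimpleGraph V) (col : Sym2 V → Fin 3) (t : Fin 4 → V) : Prop :=
  ∀ i j : Fin 4, i ≠ j → Γ.Adj (t i) (t j) ∧ col s(t i, t j) = pairColor i j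

def Pattern (Γ : SimpleGraph V) (col : Sym2 V → Fin 3) (t : Fin 4 → V) (v : V) (j : Fin 4) :
    Prop :=
  (∀ k, k ≠ j → Γ.Adj v (t k) ∧ col s(v, t k) = pairColor j k) ∧ ¬Γ.Adj v (t j)

variable {Γ : SimpleGraph V} {col : Sym2 V → Fin 3}

lemma patA (hG : Good Γ col) {t : Fin 4 → V} (hT : IsPatternK4 Γ col t) {v : V} {i : Fin 4}
    (hadj : Γ.Adj v (t i)) :
    Pattern Γ col t v (partner i (col s(v, t i))) := by
  set c := col s(v, t i) with hc
  set j := partner i c with hj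
  have hji : j ≠ i := partner_ne i c
  have hpc : pairColor i j = c := pc_partner i c
  have main : ∀ k, k ≠ j → Γ.Adj v (t k) ∧ col s(v, t k) = pairColor j k := by
    intro k hkj
    by_cases hki : k = i
    · subst hki
      refine ⟨hadj, ?_⟩
      rw [pc_symm j k, hpc]
    · have hne : c ≠ pairColor i k := by
        intro h
        exact hkj (pc_inj i j k hji (fun h' => hki h') (hpc.trans h)).symm
      have hik := hT i k (fun h => hki h.symm)
      have hcol : col s(t i, v) = c := by rw [Sym2.eq_swap]
      have hst := starLemma hG hne hadj.symm hcol hik.1 hik.2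
      refine ⟨hst.1, ?_⟩
      rw [hst.2, ← hpc]
      exact (pc_triangle i j k (Ne.symm hji) (fun h => hki h.symm) (fun h => hkj h.symm)).symm
  refine ⟨main, ?_⟩
  intro hvj
  obtain ⟨k, hki, hkj, hkc⟩ := exists_k_avoid i j (Ne.symm hji) (col s(v, t j))
  have hjk := hT j k (fun h => hkj h.symm)
  have hcol2 : col s(t j, v) = col s(v, t j) := by rw [Sym2.eq_swap]
  have hne2 : col s(v, t j) ≠ pairColor j k := Ne.symm hkc
  have hst := starLemma hG hne2 hvj.symm hcol2 hjk.1 hjk.2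
  have hmain := (main k hkj).2
  rw [hst.2] at hmain
  exact tc_ne_right _ _ hne2 hmain

lemma patUnique {t : Fin 4 → V} {v : V} {j j' : Fin 4}
    (h1 : Pattern Γ col t v j) (h2 : Pattern Γ col t v j') : j = j' := by
  by_contra hne
  exact h2.2 (h1.1 j' (fun h => hne h.symm)).1

lemma patSwap {t : Fin 4 → V} {v : V} {j : Fin 4}
    (hT : IsPatternK4 Γ col t) (hP : Pattern Γ col t v j) :
    IsPatternK4 Γ col (Function.update t j v) := by
  intro i k hik
  by_cases hi : i = j <;> by_cases hk : k = j
  · exact absurd (hi.trans hk.symm) hik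
  · subst hi
    rw [Function.update_self, Function.update_of_ne hk]
    exact hP.1 k hk
  · subst hk
    rw [Function.update_self, Function.update_of_ne hi]
    refine ⟨(hP.1 i hi).1.symm, ?_⟩
    rw [Sym2.eq_swap, (hP.1 i hi).2, pc_symm]
  · rw [Function.update_of_ne hi, Function.update_of_ne hk]
    exact hT i k hik

lemma classify (hG : Good Γ col) {t : Fin 4 → V} (hT : IsPatternK4 Γ col t) {v z : V}
    (hvz : Γ.Adj v z) : ∃ j, Pattern Γ col t v j := by
  obtain ⟨i1, i2, hne12, hcne⟩ : ∃ i1 i2 : Fin 4, i1 ≠ i2 ∧ pairColor i1 i2 ≠ col s(v, z) := by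
    by_cases hc : col s(v, z) = 0
    · exact ⟨0, 2, by decide, by rw [hc]; decide⟩
    · exact ⟨0, 1, by decide,
        by rw [show pairColor 0 1 = 0 from by decide]; exact fun h => hc h.symm⟩
  have hedge := hT i1 i2 hne12
  obtain ⟨u, w, hu, hw, huw⟩ := starStar hG (Ne.symm hcne) hvz rfl hedge.1 hedge.2
  have hw' : ∃ iw, w = t iw := by rcases hw with rfl | rfl; exacts [⟨i1, rfl⟩, ⟨i2, rfl⟩]
  obtain ⟨iw, rfl⟩ := hw'
  have hPu : ∃ j, Pattern Γ col t u j := ⟨_, patA hG hT huw⟩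
  rcases hu with rfl | rfl
  · exact hPu
  · obtain ⟨j1, hPz⟩ := hPu
    have hT' := patSwap hT hPz
    have hvz' : Γ.Adj v (Function.update t j1 u j1) := by
      rw [Function.update_self]; exact hvz
    have hP2 := patA hG hT' hvz'
    obtain ⟨k, hkj1, hkj2⟩ :=
      exists_k_notmem j1 (partner j1 (col s(v, Function.update t j1 u j1)))
    have hvk := (hP2.1 k hkj2).1
    rw [Function.update_of_ne hkj1] at hvk
    exact ⟨_, patA hG hT hvk⟩

lemma sameNotAdj (hG : Good Γ col) {t : Fin 4 → V} (hT : IsPatternK4 Γ col t) {u v : V}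
    {j : Fin 4} (hPu : Pattern Γ col t u j) (hPv : Pattern Γ col t v j) : ¬Γ.Adj u v := by
  intro h
  have hT' := patSwap hT hPu
  have hadj : Γ.Adj v (Function.update t j u j) := by
    rw [Function.update_self]; exact h.symm
  have hP2 := patA hG hT' hadj
  have hne := partner_ne j (col s(v, Function.update t j u j))
  have h2 := hP2.2
  rw [Function.update_of_ne hne] at h2
  exact h2 (hPv.1 _ hne).1

lemma diffAdj (hG : Good Γ col) {t : Fin 4 → V} (hT : IsPatternK4 Γ col t) {u v : V}
    {i j : Fin 4} (hPu : Pattern Γ col t u i) (hPv : Pattern Γ col t v j)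
    (hij : i ≠ j) : Γ.Adj u v ∧ col s(u, v) = pairColor i j := by
  obtain ⟨k, hki, hkj⟩ := exists_k_notmem i j
  obtain ⟨hA1, hc1⟩ := hPu.1 k hki
  obtain ⟨hA2, hc2⟩ := hPv.1 k hkj
  have hc1' : col s(t k, u) = pairColor k i := by rw [Sym2.eq_swap, hc1, pc_symm]
  have hc2' : col s(t k, v) = pairColor k j := by rw [Sym2.eq_swap, hc2, pc_symm]
  have hne : pairColor k i ≠ pairColor k j :=
    fun h => hij (pc_inj k i j (Ne.symm hki) (Ne.symm hkj) h)
  have hst := starLemma hG hne hA1.symm hc1' hA2.symm hc2'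
  refine ⟨hst.1, ?_⟩
  rw [hst.2]
  exact (pc_triangle k i j hki hkj hij).symm

end Pattern


section Build
variable {Γ : SimpleGraph V} {col : Sym2 V → Fin 3}

lemma mkPattern {p0 p1 p2 p3 : V}
    (h01 : Γ.Adj p0 p1) (c01 : col s(p0, p1) = 0)
    (h02 : Γ.Adj p0 p2) (c02 : col s(p0, p2) = 1)
    (h03 : Γ.Adj p0 p3) (c03 : col s(p0, p3) = 2)
    (h12 : Γ.Adj p1 p2) (c12 : col s(p1, p2) = 2)
    (h13 : Γ.Adj p1 p3) (c13 : col s(p1, p3) = 1)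
    (h23 : Γ.Adj p2 p3) (c23 : col s(p2, p3) = 0) :
    IsPatternK4 Γ col
      (fun i => if i = 0 then p0 else if i = 1 then p1 else if i = 2 then p2 else p3) := by
  have swp : ∀ x y : V, s(x, y) = s(y, x) := fun _ _ => Sym2.eq_swap
  have c01' : col s(p1, p0) = 0 := by rw [swp]; exact c01
  have c02' : col s(p2, p0) = 1 := by rw [swp]; exact c02
  have c03' : col s(p3, p0) = 2 := by rw [swp]; exact c03
  have c12' : col s(p2, p1) = 2 := by rw [swp]; exact c12
  have c13' : col s(p3, p1) = 1 := by rw [swp]; exact c13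
  have c23' : col s(p3, p2) = 0 := by rw [swp]; exact c23
  intro i j hij
  fin_cases i <;> fin_cases j
  · exact absurd rfl hij
  · exact ⟨h01, c01.trans (by decide)⟩
  · exact ⟨h02, c02.trans (by decide)⟩
  · exact ⟨h03, c03.trans (by decide)⟩
  · exact ⟨h01.symm, c01'.trans (by decide)⟩
  · exact absurd rfl hij
  · exact ⟨h12, c12.trans (by decide)⟩
  · exact ⟨h13, c13.trans (by decide)⟩
  · exact ⟨h02.symm, c02'.trans (by decide)⟩
  · exact ⟨h12.symm, c12'.trans (by decide)⟩
  · exact absurd rfl hij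
  · exact ⟨h23, c23.trans (by decide)⟩
  · exact ⟨h03.symm, c03'.trans (by decide)⟩
  · exact ⟨h13.symm, c13'.trans (by decide)⟩
  · exact ⟨h23.symm, c23'.trans (by decide)⟩
  · exact absurd rfl hij

end Build

/-- If a 3-edge-colored graph has exactly `√(2·R·G·B) > 0` rainbow triangles, then it
is obtained from a blowup of a properly 3-edge-colored `K₄` by possibly adding a set
of isolated vertices. -/
theorem stmt1 (Γ : SimpleGraph V) (col : Sym2 V → Fin 3) (R G B T : ℕ)
    (hR : R = (colorEdges Γ col 0).card)
    (hG : G = (colorEdges Γ col 1).card)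
    (hB : B = (colorEdges Γ col 2).card)
    (hT : T = (rainbowTriangles Γ col).card)
    (heq : (T : ℝ) = Real.sqrt (2 * R * G * B))
    (hpos : 0 < T) :
    IsBlowupK4PlusIsolated Γ col := by
  classical
  subst hR hG hB hT
  have hnonneg : (0:ℝ) ≤ 2 * (colorEdges Γ col 0).card * (colorEdges Γ col 1).card
      * (colorEdges Γ col 2).card := by positivity
  have h2 : ((rainbowTriangles Γ col).card : ℝ)^2 = 2 * (colorEdges Γ col 0).card
      * (colorEdges Γ col 1).card * (colorEdges Γ col 2).card := by
    rw [heq, Real.sq_sqrt hnonneg]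
  have hsqnat : ((rainbowTriangles Γ col).card)^2 = 2 * (colorEdges Γ col 0).card
      * (colorEdges Γ col 1).card * (colorEdges Γ col 2).card := by exact_mod_cast h2
  have hGood : Good Γ col := ⟨hsqnat, hpos⟩
  have hPos := (mainEq Γ col hGood).1
  have hne : (rainbowTriangles Γ col).Nonempty := Finset.card_pos.1 hpos
  obtain ⟨S0, hS0⟩ := hne
  rw [rainbowTriangles, Finset.mem_filter] at hS0
  obtain ⟨-, a, b, c, rfl, hab, hac, hbc, n1, n2, n3⟩ := hS0
  obtain ⟨u, v, w, -, huv, huw, hvw, c01, c03, c13⟩ := reorient hab hac hbc n1 n2 n3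
  have hc10 : col s(v, u) = 0 := by rw [Sym2.eq_swap]; exact c01
  have hdp := hPos v u huv.symm hc10
  have hfil : (Finset.univ.filter (fun x => Γ.Adj v x ∧ col s(v, x) = 2 ∧
      Γ.Adj u x ∧ col s(u, x) = 1)).Nonempty := by
    rw [← Finset.card_pos]
    exact hdp
  obtain ⟨s4, hs4⟩ := hfil
  rw [Finset.mem_filter] at hs4
  obtain ⟨-, hvs4, cvs4, hus4, cus4⟩ := hs4
  have hs4w := starLemma hGood (show (1:Fin 3) ≠ 2 by decide) hus4 cus4 huw c03
  have c23x : col s(s4, w) = 0 := by rw [hs4w.2]; decide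
  have hT4 := mkPattern huv c01 hus4 cus4 huw c03 hvs4 cvs4 hvw c13 hs4w.1 c23x
  set t : Fin 4 → V :=
    fun i => if i = 0 then u else if i = 1 then v else if i = 2 then s4 else w with ht4def
  have hPext : ∀ (x : V) (i : Fin 4),
      (if h : ∃ j, Pattern Γ col t x j then some h.choose else none) = some i →
      Pattern Γ col t x i := by
    intro x i h
    by_cases hex : ∃ j, Pattern Γ col t x j
    · rw [dif_pos hex] at h
      have hi := Option.some.inj h
      rw [← hi]
      exact hex.choose_spec
    · rw [dif_neg hex] at h; cases h
  refine ⟨fun x => if h : ∃ j, Pattern Γ col t x j then some h.choose else none,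
    Equiv.refl _, ?_, ?_⟩
  · intro x y
    constructor
    · intro hxy
      have hx := classify hGood hT4 hxy
      have hy := classify hGood hT4 hxy.symm
      refine ⟨hx.choose, hy.choose, ?_, ?_, ?_⟩
      · intro hEq
        have hPx := hx.choose_spec
        have hPy := hy.choose_spec
        rw [hEq] at hPx
        exact sameNotAdj hGood hT4 hPx hPy hxy
      · exact dif_pos hx
      · exact dif_pos hy
    · rintro ⟨i, j, hij, hPi, hPj⟩
      exact (diffAdj hGood hT4 (hPext x i hPi) (hPext y j hPj) hij).1
  · intro x y i j hPi hPj hxy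
    have hPx := hPext x i hPi
    have hPy := hPext y j hPj
    have hij : i ≠ j := by
      intro hEq
      rw [hEq] at hPx
      exact sameNotAdj hGood hT4 hPx hPy hxy
    rw [Equiv.refl_apply]
    exact (diffAdj hGood hT4 hPx hPy hij).2


end RainbowTri
end
end

section
/- Let Γ be a finite simple graph each of whose edges is colored with one of six colors 1,…,6, and let C_i denote the number of edges of color i. Fix a rainbow 6-edge-coloring χ of K4 (an assignment of the six colors bijectively to the six edges of K4), and let H be the number of 4-vertex subsets of Γ that induce a complete graph whose edge coloring is isomorphic to χ. Then H^3 ≤ C_1·C_2·C_3·C_4·C_5·C_6. -/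
open scoped Classical

noncomputable section

namespace RainbowK4

variable {V : Type*} [Fintype V]

/-- The finset of edges of `Γ` having color `c` among the six colors `Fin 6`. -/
def colorEdges6 (Γ : SimpleGraph V) (col : Sym2 V → Fin 6) (c : Fin 6) : Finset (Sym2 V) :=
  Finset.univ.filter (fun e => e ∈ Γ.edgeSet ∧ col e = c)

/-- `χ` is a rainbow 6-edge-coloring of `K₄` (on vertex set `Fin 4`): distinct edges
(non-diagonal elements of `Sym2 (Fin 4)`) receive distinct colors. -/
def IsRainbowK4Coloring (χ : Sym2 (Fin 4) → Fin 6) : Prop :=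
  ∀ e e' : Sym2 (Fin 4), ¬e.IsDiag → ¬e'.IsDiag → χ e = χ e' → e = e'

/-- The 4-vertex subsets of `Γ` inducing a complete graph whose edge coloring is
isomorphic to `χ`. -/
def chiCopies (Γ : SimpleGraph V) (col : Sym2 V → Fin 6) (χ : Sym2 (Fin 4) → Fin 6) :
    Finset (Finset V) :=
  Finset.univ.filter (fun s => ∃ f : Fin 4 → V, Function.Injective f ∧
    s = Finset.univ.image f ∧
    ∀ i j : Fin 4, i ≠ j → Γ.Adj (f i) (f j) ∧ col s(f i, f j) = χ s(i, j))

lemma key (Γ : SimpleGraph V) (col : Sym2 V → Fin 6) (χ : Sym2 (Fin 4) → Fin 6)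
    (i j k l : Fin 4) (hij : i ≠ j) (hkl : k ≠ l)
    (hu : ({i, j, k, l} : Finset (Fin 4)) = Finset.univ) :
    (chiCopies Γ col χ).card ≤
      (colorEdges6 Γ col (χ s(i, j))).card * (colorEdges6 Γ col (χ s(k, l))).card := by
  rcases (chiCopies Γ col χ).eq_empty_or_nonempty with h | ⟨s0, hs0⟩
  · simp [h]
  have hP0 : ∃ f : Fin 4 → V, Function.Injective f ∧ s0 = Finset.univ.image f ∧
      ∀ a b : Fin 4, a ≠ b → Γ.Adj (f a) (f b) ∧ col s(f a, f b) = χ s(a, b) :=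
    (Finset.mem_filter.mp hs0).2
  haveI : Nonempty V := ⟨hP0.choose 0⟩
  rw [← Finset.card_product]
  set P : Finset V → Prop := fun s => ∃ f : Fin 4 → V, Function.Injective f ∧
      s = Finset.univ.image f ∧
      ∀ a b : Fin 4, a ≠ b → Γ.Adj (f a) (f b) ∧ col s(f a, f b) = χ s(a, b) with hPdef
  apply Finset.card_le_card_of_injOn
    (fun s => if h : P s then (s(h.choose i, h.choose j), s(h.choose k, h.choose l))
      else (s(hP0.choose 0, hP0.choose 0), s(hP0.choose 0, hP0.choose 0)))
  · intro s hs
    have hP : P s := (Finset.mem_filter.mp hs).2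
    obtain ⟨hinj, hset, hprop⟩ := hP.choose_spec
    simp only [dif_pos hP]
    rw [Finset.mem_coe, Finset.mem_product]
    constructor <;>
    · rw [colorEdges6, Finset.mem_filter]
      refine ⟨Finset.mem_univ _, ?_, ?_⟩
      · exact (hprop _ _ (by assumption)).1
      · exact (hprop _ _ (by assumption)).2
  · intro s hs t ht heq
    have hPs : P s := (Finset.mem_filter.mp hs).2
    have hPt : P t := (Finset.mem_filter.mp ht).2
    simp only [dif_pos hPs, dif_pos hPt, Prod.mk.injEq] at heq
    obtain ⟨hfinj, hfset, -⟩ := hPs.choose_spec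
    obtain ⟨hginj, hgset, -⟩ := hPt.choose_spec
    set f := hPs.choose
    set g := hPt.choose
    rw [hfset, hgset, ← hu]
    simp only [Finset.image_insert, Finset.image_singleton]
    rcases Sym2.eq_iff.mp heq.1 with ⟨h1, h2⟩ | ⟨h1, h2⟩ <;>
      rcases Sym2.eq_iff.mp heq.2 with ⟨h3, h4⟩ | ⟨h3, h4⟩ <;>
      · rw [h1, h2, h3, h4]; all_goals (ext x; simp; tauto)

/-- If `Γ` is a 6-edge-colored graph with `C i` edges of color `i`, `χ` is a fixed
rainbow 6-edge-coloring of `K₄`, and `H` is the number of 4-vertex subsets of `Γ`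
inducing a complete graph whose coloring is isomorphic to `χ`, then
`H³ ≤ C 1 · C 2 · C 3 · C 4 · C 5 · C 6`. -/
theorem stmt5 (Γ : SimpleGraph V) (col : Sym2 V → Fin 6)
    (χ : Sym2 (Fin 4) → Fin 6) (hχ : IsRainbowK4Coloring χ)
    (C : Fin 6 → ℕ) (hC : ∀ i, C i = (colorEdges6 Γ col i).card)
    (H : ℕ) (hH : H = (chiCopies Γ col χ).card) :
    H ^ 3 ≤ ∏ i : Fin 6, C i := by
  set E : Fin 6 → Sym2 (Fin 4) :=
    ![s(0, 1), s(2, 3), s(0, 2), s(1, 3), s(0, 3), s(1, 2)] with hE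
  have hσinj : Function.Injective (fun m => χ (E m)) := by
    intro m n h
    have hnd : ∀ m : Fin 6, ¬(E m).IsDiag := by decide
    have := hχ _ _ (hnd m) (hnd n) h
    revert this
    fin_cases m <;> fin_cases n <;> simp [hE] <;> decide
  have hprod : ∏ m : Fin 6, C (χ (E m)) = ∏ i : Fin 6, C i :=
    Fintype.prod_bijective _ (Finite.injective_iff_bijective.mp hσinj) _ _ (fun _ => rfl)
  have h1 := key Γ col χ 0 1 2 3 (by decide) (by decide) (by decide)
  have h2 := key Γ col χ 0 2 1 3 (by decide) (by decide) (by decide)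
  have h3 := key Γ col χ 0 3 1 2 (by decide) (by decide) (by decide)
  simp only [← hC] at h1 h2 h3
  rw [← hH] at h1 h2 h3
  calc H ^ 3 = H * H * H := by ring
    _ ≤ (C (χ s(0, 1)) * C (χ s(2, 3))) * (C (χ s(0, 2)) * C (χ s(1, 3))) *
        (C (χ s(0, 3)) * C (χ s(1, 2))) := Nat.mul_le_mul (Nat.mul_le_mul h1 h2) h3
    _ = ∏ i : Fin 6, C i := by
        have h5 : E 5 = s(1, 2) := rfl
        have h2' : E 2 = s(0, 2) := rfl
        have h3' : E 3 = s(1, 3) := rfl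
        have h4' : E 4 = s(0, 3) := rfl
        rw [← hprod, Fin.prod_univ_six, h5, h2', h3', h4']
        simp only [hE]
        norm_num
        ring

end RainbowK4
end
end

section
/- Let Γ be a finite simple graph each of whose edges is colored red, green, or blue, with G green edges and B blue edges. Let S be the set of ordered tuples (u,v,x,y) of vertices of Γ (where x = y is allowed) such that uv is a red edge, ux and uy are blue edges, and vx and vy are green edges. Then |S| ≤ G·B. -/
open scoped Classical

noncomputable section

namespace RainbowTri

variable {V : Type*} [Fintype V]

/-- The number of ordered tuples `(u,v,x,y)` with `uv` red, `ux`, `uy` blue and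
`vx`, `vy` green (`x = y` allowed) is at most `G·B`. -/
theorem stmt6 (Γ : SimpleGraph V) (col : Sym2 V → Fin 3) (G B : ℕ)
    (hG : G = (colorEdges Γ col 1).card)
    (hB : B = (colorEdges Γ col 2).card) :
    (tupleSet Γ col).card ≤ G * B := by
  subst hG hB
  rw [← Finset.card_product]
  apply Finset.card_le_card_of_injOn
    (fun t : V × V × V × V => (s(t.2.1, t.2.2.1), s(t.1, t.2.2.2)))
  · rintro ⟨u, v, x, y⟩ ht
    simp only [tupleSet, Finset.mem_coe, Finset.mem_filter, Finset.mem_univ, true_and] at ht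
    obtain ⟨h1, h2, h3, h4, h5, h6, h7, h8, h9, h10⟩ := ht
    simp only [Finset.mem_coe, Finset.mem_product, colorEdges, Finset.mem_filter, Finset.mem_univ, true_and,
      SimpleGraph.mem_edgeSet]
    exact ⟨⟨h7, h8⟩, ⟨h5, h6⟩⟩
  · rintro ⟨u, v, x, y⟩ ht ⟨u', v', x', y'⟩ ht' heq
    simp only [tupleSet, Finset.mem_coe, Finset.mem_filter, Finset.mem_univ, true_and] at ht ht'
    obtain ⟨h1, h2, h3, h4, h5, h6, h7, h8, h9, h10⟩ := ht
    obtain ⟨g1, g2, g3, g4, g5, g6, g7, g8, g9, g10⟩ := ht'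
    obtain ⟨e1, e2⟩ := Prod.mk.injEq .. ▸ heq
    rw [Sym2.eq_iff] at e1 e2
    rcases e1 with ⟨rfl, rfl⟩ | ⟨rfl, rfl⟩ <;> rcases e2 with ⟨rfl, rfl⟩ | ⟨rfl, rfl⟩
    · rfl
    · -- u' = y, y' = u : edge u'v' = s(y,v) would be red and green
      rw [Sym2.eq_swap] at g2
      rw [g2] at h10
      exact absurd h10 (by decide)
    · -- v' = x, x' = v : edge u'x' = s(u,v) would be blue and red
      rw [g4] at h2
      exact absurd h2 (by decide)
    · -- both swapped : u'x' = s(y,v) blue but vy green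
      rw [Sym2.eq_swap] at g4
      rw [g4] at h10
      exact absurd h10 (by decide)

end RainbowTri
end
end
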